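/- Let μ be a fuzzy set of an MTL-algebra L. Then μ is an (∈̄,∈̄∨q̄)-fuzzy MV-filter of L if and only if for every t ∈ (0.5, 1] the ∈-level set F(t) = {x ∈ L : μ(x) ≥ t} is either empty or an MV-filter of L. -/
import Mathlib


/-- An MTL-algebra: a bounded lattice with `⊥ ≠ ⊤`, a product `odot` and residuum `rimp`,
where `odot` is associative, commutative and monotone in each argument, `⊤` is a unit,
the Galois correspondence holds and prelinearity holds. -/
class MTL (L : Type*) extends Lattice L, BoundedOrder L where
  odot : L → L → L
  rimp : L → L → L
  bot_ne_top : (⊥ : L) ≠ ⊤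
  odot_assoc : ∀ x y z : L, odot (odot x y) z = odot x (odot y z)
  odot_comm : ∀ x y : L, odot x y = odot y x
  odot_mono_left : ∀ x y z : L, x ≤ y → odot x z ≤ odot y z
  odot_mono_right : ∀ x y z : L, x ≤ y → odot z x ≤ odot z y
  odot_top : ∀ x : L, odot x ⊤ = x
  galois : ∀ x y z : L, odot x y ≤ z ↔ x ≤ rimp y z
  prelinear : ∀ x y : L, rimp x y ⊔ rimp y x = ⊤

open MTL

variable {L : Type*} [MTL L]

/-- A subset `A` is a filter: `1 ∈ A` and it is closed under modus ponens. -/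
def IsFilter' (A : Set L) : Prop :=
  (⊤ : L) ∈ A ∧ ∀ x y : L, x ∈ A → rimp x y ∈ A → y ∈ A

/-- An (∈̄,∈̄∨q̄)-fuzzy filter: `max(μ(1), 0.5) ≥ μ(x)` and
`max(μ(y), 0.5) ≥ min(μ(x → y), μ(x))`. -/
def IsBarFuzzyFilter (μ : L → ℝ) : Prop :=
  (∀ x : L, max (μ ⊤) (1/2) ≥ μ x) ∧
    ∀ x y : L, max (μ y) (1/2) ≥ min (μ (rimp x y)) (μ x)

/-- An MV-filter: a filter such that `x → y ∈ A` implies `((y → x) → x) → y ∈ A`. -/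
def IsMVFilter (A : Set L) : Prop :=
  IsFilter' A ∧ ∀ x y : L, rimp x y ∈ A → rimp (rimp (rimp y x) x) y ∈ A

/-- An (∈̄,∈̄∨q̄)-fuzzy MV-filter: `max(μ(((y → x) → x) → y), 0.5) ≥ μ(x → y)`. -/
def IsBarFuzzyMVFilter (μ : L → ℝ) : Prop :=
  IsBarFuzzyFilter μ ∧
    ∀ x y : L, max (μ (rimp (rimp (rimp y x) x) y)) (1/2) ≥ μ (rimp x y)

theorem stmt_16 (μ : L → ℝ) (hμ0 : ∀ x : L, 0 ≤ μ x) (hμ1 : ∀ x : L, μ x ≤ 1) :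
    IsBarFuzzyMVFilter μ ↔ (∀ t : ℝ, 1/2 < t → t ≤ 1 → ({x : L | t ≤ μ x} = ∅ ∨ IsMVFilter {x : L | t ≤ μ x})) := by

  constructor
  · rintro ⟨⟨h1, h2⟩, h3⟩ t ht ht1
    by_cases hne : {x : L | t ≤ μ x} = ∅
    · exact Or.inl hne
    right
    obtain ⟨a, ha⟩ := Set.nonempty_iff_ne_empty.2 hne
    refine ⟨⟨?_, fun x y hx hxy => ?_⟩, fun x y hxy => ?_⟩
    · have h' : t ≤ max (μ ⊤) (1/2) := le_trans ha (h1 a)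
      rcases le_max_iff.1 h' with h | h
      · exact h
      · simp only [Set.mem_setOf_eq]; linarith
    · have h' : t ≤ max (μ y) (1/2) := le_trans (le_min hxy hx) (h2 x y)
      rcases le_max_iff.1 h' with h | h
      · exact h
      · simp only [Set.mem_setOf_eq]; linarith
    · have h' : t ≤ max (μ (rimp (rimp (rimp y x) x) y)) (1/2) := le_trans hxy (h3 x y)
      rcases le_max_iff.1 h' with h | h
      · exact h
      · simp only [Set.mem_setOf_eq]; linarith
  · intro h
    refine ⟨⟨fun x => ?_, fun x y => ?_⟩, fun x y => ?_⟩
    · by_contra hc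
      push_neg at hc
      have ht : 1/2 < μ x := lt_of_le_of_lt (le_max_right _ _) hc
      rcases h (μ x) ht (hμ1 x) with he | hf
      · have hx : x ∈ {z : L | μ x ≤ μ z} := Set.mem_setOf_eq ▸ le_refl (μ x)
        rw [he] at hx
        exact hx
      · have htop : (⊤ : L) ∈ {z : L | μ x ≤ μ z} := hf.1.1
        exact absurd (le_trans htop (le_max_left _ _)) (not_le.2 hc)
    · by_contra hc
      push_neg at hc
      set t := min (μ (rimp x y)) (μ x) with hts
      have ht : 1/2 < t := lt_of_le_of_lt (le_max_right _ _) hc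
      have ht1 : t ≤ 1 := le_trans (min_le_right _ _) (hμ1 x)
      rcases h t ht ht1 with he | hf
      · have hx : x ∈ {z : L | t ≤ μ z} := Set.mem_setOf_eq ▸ min_le_right _ _
        rw [he] at hx
        exact hx
      · have hy : y ∈ {z : L | t ≤ μ z} :=
          hf.1.2 x y (Set.mem_setOf_eq ▸ min_le_right _ _) (Set.mem_setOf_eq ▸ min_le_left _ _)
        exact absurd (le_trans hy (le_max_left _ _)) (not_le.2 hc)
    · by_contra hc
      push_neg at hc
      set t := μ (rimp x y) with hts
      have ht : 1/2 < t := lt_of_le_of_lt (le_max_right _ _) hc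
      rcases h t ht (hμ1 _) with he | hf
      · have hx : rimp x y ∈ {z : L | t ≤ μ z} := Set.mem_setOf_eq ▸ le_refl t
        rw [he] at hx
        exact hx
      · have hy : rimp (rimp (rimp y x) x) y ∈ {z : L | t ≤ μ z} :=
          hf.2 x y (Set.mem_setOf_eq ▸ le_refl t)
        exact absurd (le_trans hy (le_max_left _ _)) (not_le.2 hc)
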